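/- Let Λ and L3 be natural numbers with 3 ≤ Λ < L3 and L3 even. Then the cardinality of the set of sextuples (a,b,c,d,e,f) in S(Λ,Λ,L3) satisfying a ≤ b equals the cardinality of the set of triples (a,b,c) of natural numbers satisfying 2a+1 ≤ Λ, a ≤ b, 2b+1 ≤ Λ, 2c+1 ≤ L3, 2Λ+2c ≥ L3+2a+2b, L3+2b ≥ 2a+2c, and L3+2a ≥ 2b+2c. -/
import Mathlib


/-- The set of adjacency data `(a,b,c,d,e,f)` of connected multigraphs on three
nodes with degrees `L1, L2, L3`. -/
def S (L1 L2 L3 : ℕ) : Set (ℕ × ℕ × ℕ × ℕ × ℕ × ℕ) :=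
  {(a, b, c, d, e, f) : ℕ × ℕ × ℕ × ℕ × ℕ × ℕ |
    2 * a + d + e = L1 ∧ 2 * b + d + f = L2 ∧ 2 * c + e + f = L3 ∧
    1 ≤ d + e ∧ 1 ≤ d + f ∧ 1 ≤ e + f}

theorem count_two_smaller_degrees_equal (Λ L3 : ℕ) (h1 : 3 ≤ Λ) (h2 : Λ < L3)
    (heven : Even L3) :
    {x ∈ S Λ Λ L3 | x.1 ≤ x.2.1}.ncard =
      {(a, b, c) : ℕ × ℕ × ℕ |
        2 * a + 1 ≤ Λ ∧ a ≤ b ∧ 2 * b + 1 ≤ Λ ∧ 2 * c + 1 ≤ L3 ∧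
        L3 + 2 * a + 2 * b ≤ 2 * Λ + 2 * c ∧ 2 * a + 2 * c ≤ L3 + 2 * b ∧
        2 * b + 2 * c ≤ L3 + 2 * a}.ncard := by
  obtain ⟨m, hm⟩ := heven
  have key : {(a, b, c) : ℕ × ℕ × ℕ |
        2 * a + 1 ≤ Λ ∧ a ≤ b ∧ 2 * b + 1 ≤ Λ ∧ 2 * c + 1 ≤ L3 ∧
        L3 + 2 * a + 2 * b ≤ 2 * Λ + 2 * c ∧ 2 * a + 2 * c ≤ L3 + 2 * b ∧
        2 * b + 2 * c ≤ L3 + 2 * a} =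
      (fun x : ℕ × ℕ × ℕ × ℕ × ℕ × ℕ => (x.1, x.2.1, x.2.2.1)) ''
        {x ∈ S Λ Λ L3 | x.1 ≤ x.2.1} := by
    ext ⟨a, b, c⟩
    simp only [Set.mem_setOf_eq, Set.mem_image, Set.mem_sep_iff, S, Prod.exists]
    constructor
    · rintro ⟨ha, hab, hb, hc, hd, he, hf⟩
      exact ⟨a, b, c, Λ + c - a - b - m, m + b - c - a, m + a - c - b,
        ⟨by constructor <;> [omega; constructor <;> [omega;
          constructor <;> [omega; constructor <;> [omega;
          constructor <;> omega]]]], hab⟩, rfl⟩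
    · rintro ⟨a', b', c', d, e, f, ⟨⟨h₁, h₂, h₃, h₄, h₅, h₆⟩, hab⟩, heq⟩
      simp only [Prod.mk.injEq] at heq
      obtain ⟨rfl, rfl, rfl⟩ := heq
      omega
  rw [key, Set.ncard_image_of_injOn]
  rintro ⟨a, b, c, d, e, f⟩ ⟨hx, -⟩ ⟨a', b', c', d', e', f'⟩ ⟨hy, -⟩ h
  simp only [S, Set.mem_setOf_eq] at hx hy
  simp only [Prod.mk.injEq] at h
  obtain ⟨rfl, rfl, rfl⟩ := h
  simp only [Prod.mk.injEq]
  refine ⟨trivial, trivial, trivial, ?_, ?_, ?_⟩ <;> omega
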